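/- For every finite graph H (loops allowed) and every connected finite simple graph G on n ≥ 2 vertices, hom(G,H) ≤ hom(K_{1,n−1},H), where K_{1,n−1} is the star on n vertices. -/

import Mathlib

/-- The number of `H`-colorings of a simple graph `G`, where the target graph (with loops
allowed) is given by a symmetric adjacency relation `H` on its vertex type. -/
noncomputable def homCount {α β : Type*} (G : SimpleGraph α) (H : β → β → Prop) : ℕ :=
  Nat.card {f : α → β // ∀ ⦃u v⦄, G.Adj u v → H (f u) (f v)}

universe u v

private noncomputable def degH {β : Type u} [Fintype β] (H : β → β → Prop) (b : β) : ℕ :=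
  Nat.card {c : β // H b c}

private lemma aux_rearrange (x y k : ℕ) :
    x * y^(k+1) + y * x^(k+1) ≤ x^(k+2) + y^(k+2) := by
  rcases le_total x y with h | h
  · have hp : x^(k+1) ≤ y^(k+1) := Nat.pow_le_pow_left h _
    calc x * y^(k+1) + y * x^(k+1) ≤ x * x^(k+1) + y * y^(k+1) :=
          mul_add_mul_le_mul_add_mul h hp
      _ = x^(k+2) + y^(k+2) := by ring
  · have hp : y^(k+1) ≤ x^(k+1) := Nat.pow_le_pow_left h _
    calc x * y^(k+1) + y * x^(k+1) = y * x^(k+1) + x * y^(k+1) := by ring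
      _ ≤ y * y^(k+1) + x * x^(k+1) := mul_add_mul_le_mul_add_mul h hp
      _ = x^(k+2) + y^(k+2) := by ring

private lemma amgm (k x y : ℕ) : (k+1) * (x * y^k) ≤ x^(k+1) + k * y^(k+1) := by
  induction k with
  | zero => simp
  | succ k ih =>
      calc (k+2) * (x * y^(k+1)) = ((k+1) * (x * y^k)) * y + x * y^(k+1) := by ring
        _ ≤ (x^(k+1) + k * y^(k+1)) * y + x * y^(k+1) :=
            Nat.add_le_add_right (Nat.mul_le_mul_right _ ih) _
        _ = (x * y^(k+1) + y * x^(k+1)) + k * y^(k+2) := by ring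
        _ ≤ (x^(k+2) + y^(k+2)) + k * y^(k+2) :=
            Nat.add_le_add_right (aux_rearrange x y k) _
        _ = x^(k+2) + (k+1) * y^(k+2) := by ring


private lemma exists_good_list {α : Type*} [Fintype α] {G : SimpleGraph α} (hG : G.Connected)
    (w : α) :
    ∀ (k : ℕ) (l : List α), l ≠ [] → l.Nodup → l.head? = some w →
      (∀ (i : ℕ) (hi : i < l.length), 0 < i →
        ∃ (j : ℕ) (hj : j < l.length), j < i ∧ G.Adj (l.get ⟨j, hj⟩) (l.get ⟨i, hi⟩)) →
      Fintype.card α - l.length ≤ k →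
      ∃ L : List α, L.Nodup ∧ L.length = Fintype.card α ∧ L.head? = some w ∧
        (∀ (i : ℕ) (hi : i < L.length), 0 < i →
          ∃ (j : ℕ) (hj : j < L.length), j < i ∧ G.Adj (L.get ⟨j, hj⟩) (L.get ⟨i, hi⟩)) := by
  intro k
  induction k with
  | zero =>
      intro l hne hnd hhead hpar hcard
      refine ⟨l, hnd, ?_, hhead, hpar⟩
      have h1 : l.length ≤ Fintype.card α := by
        simpa using List.Nodup.length_le_card hnd
      omega
  | succ k ih =>
      intro l hne hnd hhead hpar hcard
      by_cases hlen : l.length = Fintype.card α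
      · exact ⟨l, hnd, hlen, hhead, hpar⟩
      · have h1 : l.length ≤ Fintype.card α := by
          simpa using List.Nodup.length_le_card hnd
        have h2 : l.length < Fintype.card α := by omega
        -- there is a vertex not in l
        have hex : ∃ a : α, a ∉ l := by
          by_contra hall
          push_neg at hall
          have : (Fintype.card α : ℕ) ≤ l.length := by
            classical
            have := List.Nodup.length_le_card hnd
            have hsub : (Finset.univ : Finset α) ⊆ l.toFinset := fun a _ => by
              simpa using hall a
            have := Finset.card_le_card hsub
            simpa [List.toFinset_card_of_nodup hnd] using this
          omega
        obtain ⟨a, ha⟩ := hex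
        have hw : w ∈ l := by
          have : l.head? = some w := hhead
          cases l with
          | nil => simp at hne
          | cons b t => simp at this; simp [this]
        obtain ⟨p⟩ := hG.preconnected w a
        obtain ⟨d, hd, hfst, hsnd⟩ :=
          p.exists_boundary_dart {x | x ∈ l} hw ha
        -- extend the list by d.snd
        have hdadj : G.Adj d.fst d.snd := d.adj
        have hfst' : d.fst ∈ l := hfst
        obtain ⟨j, hjd⟩ := List.mem_iff_get.mp hfst'
        refine ih (l ++ [d.snd]) (by simp) ?_ ?_ ?_ ?_
        · simp [List.nodup_append, hnd]
          exact fun b hb h => hsnd (by subst h; exact hb)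
        · cases l with
          | nil => simp at hne
          | cons b t => simpa using hhead
        · intro i hi hipos
          rw [List.length_append, List.length_singleton] at hi
          by_cases hil : i < l.length
          · obtain ⟨j', hj', hlt, hadj⟩ := hpar i hil hipos
            refine ⟨j', by simp; omega, hlt, ?_⟩
            simp only [List.get_eq_getElem, List.getElem_append_left hj', List.getElem_append_left hil] at *
            exact hadj
          · have hieq : i = l.length := by omega
            refine ⟨j.1, by simp, by omega, ?_⟩
            have e1 : (l ++ [d.snd]).get ⟨j.1, by simp⟩ = d.fst := by
              rw [List.get_eq_getElem, List.getElem_append_left j.2]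
              simpa using hjd
            have e2 : (l ++ [d.snd]).get ⟨i, by simp; omega⟩ = d.snd := by
              subst hieq
              simp
            rw [e1, e2]
            exact hdadj
        · simp
          omega

private lemma exists_enum {α : Type*} [Fintype α] {G : SimpleGraph α} (hG : G.Connected)
    (w : α) {n : ℕ} (hcard : Fintype.card α = n) (hn0 : 0 < n) :
    ∃ v : Fin n ≃ α, v ⟨0, hn0⟩ = w ∧ ∀ i : Fin n, 0 < (i : ℕ) →
      ∃ j : Fin n, (j : ℕ) < (i : ℕ) ∧ G.Adj (v j) (v i) := by
  obtain ⟨L, hnd, hlen, hhead, hpar⟩ := exists_good_list hG w (Fintype.card α) [w]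
    (by simp) (by simp) (by simp) (by intro i hi hipos; simp at hi; omega) (by simp)
  have hlen' : L.length = n := by rw [hlen, hcard]
  have hinj : Function.Injective (fun i : Fin n => L.get (Fin.cast hlen'.symm i)) := by
    intro i j hij
    have := (List.nodup_iff_injective_get).mp hnd hij
    simpa [Fin.ext_iff] using this
  have hbij : Function.Bijective (fun i : Fin n => L.get (Fin.cast hlen'.symm i)) := by
    rw [Fintype.bijective_iff_injective_and_card]
    exact ⟨hinj, by simp [hcard]⟩
  refine ⟨Equiv.ofBijective _ hbij, ?_, ?_⟩
  · show L.get ⟨0, _⟩ = w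
    have hne : L ≠ [] := by intro h; rw [h] at hlen'; simp at hlen'; omega
    cases L with
    | nil => simp at hne
    | cons b t => simp at hhead; simpa using hhead
  · intro i hipos
    obtain ⟨j, hj, hlt, hadj⟩ := hpar i.1 (by omega) hipos
    exact ⟨⟨j, by omega⟩, hlt, hadj⟩




private lemma star_count {β : Type*} [Fintype β] (H : β → β → Prop) (hSymm : Symmetric H)
    (m : ℕ) :
    homCount (completeBipartiteGraph (Fin 1) (Fin m)) H = ∑ b : β, (degH H b) ^ m := by
  classical
  have e : {f : Fin 1 ⊕ Fin m → β // ∀ ⦃u v⦄,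
      (completeBipartiteGraph (Fin 1) (Fin m)).Adj u v → H (f u) (f v)} ≃
      (b : β) × (Fin m → {c : β // H b c}) := by
    refine
      { toFun := fun f => ⟨f.1 (Sum.inl 0), fun j => ⟨f.1 (Sum.inr j), ?_⟩⟩
        invFun := fun p => ⟨Sum.elim (fun _ => p.1) (fun j => (p.2 j).1), ?_⟩
        left_inv := ?_
        right_inv := ?_ }
    · exact f.2 (by simp [completeBipartiteGraph])
    · rintro (i | i) (j | j) hadj <;>
        simp only [completeBipartiteGraph, Sum.elim_inl, Sum.elim_inr] at hadj ⊢ <;>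
        first
          | exact (p.2 j).2
          | exact hSymm (p.2 i).2
          | simp at hadj
    · rintro ⟨f, hf⟩
      ext u
      rcases u with i | j
      · simp [Subsingleton.elim i 0]
      · simp
    · rintro ⟨b, g⟩
      rfl
  rw [homCount, Nat.card_congr e, Nat.card_eq_fintype_card, Fintype.card_sigma]
  congr 1
  ext b
  rw [Fintype.card_fun, Fintype.card_fin, degH, Nat.card_eq_fintype_card]





open Classical in
private lemma hdeg {β : Type u} [Fintype β] (H : β → β → Prop) (b : β) (t : ℕ) :
    (∑ c : β, if H b c then t else 0) = t * degH H b := by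
  rw [← Finset.sum_filter, Finset.sum_const, smul_eq_mul, mul_comm]
  congr 1
  rw [degH, Nat.card_eq_fintype_card, Fintype.card_subtype]


private lemma sum_univ_congr {γ : Type*} {M : Type*} [AddCommMonoid M]
    (i1 i2 : Fintype γ) (f : γ → M) :
    @Finset.sum γ M _ (@Finset.univ γ i1) f = @Finset.sum γ M _ (@Finset.univ γ i2) f := by
  cases Subsingleton.elim i1 i2
  rfl

open Classical in
private lemma main_claim {β : Type u} [Fintype β] (H : β → β → Prop) (hSymm : Symmetric H) :
    ∀ (n : ℕ) (α : Type v) [Fintype α] (G : SimpleGraph α), Fintype.card α = n →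
      G.Connected → ∀ (w : α) (k : ℕ),
      (∑ f : α → β, if (∀ ⦃a b : α⦄, G.Adj a b → H (f a) (f b)) then (degH H (f w))^k else 0)
        ≤ ∑ b : β, (degH H b) ^ (n - 1 + k) := by
  intro n
  induction n using Nat.strong_induction_on with
  | _ n IH =>
  intro α _ G hcard hconn w k
  have hα : Nonempty α := hconn.nonempty
  have hn1 : 0 < n := hcard ▸ Fintype.card_pos
  rcases Nat.lt_or_ge n 2 with hn2 | hn2
  · -- n = 1 case
    have hn : n = 1 := by omega
    have hsub : Subsingleton α := by
      rw [← Fintype.card_le_one_iff_subsingleton]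
      omega
    have hbij : Function.Bijective (fun f : α → β => f w) := by
      constructor
      · intro f g hfg
        funext a
        rw [Subsingleton.elim a w]
        exact hfg
      · intro b
        exact ⟨fun _ => b, rfl⟩
    have h1 : (∑ f : α → β, if (∀ ⦃a b : α⦄, G.Adj a b → H (f a) (f b))
          then (degH H (f w))^k else 0) ≤ ∑ f : α → β, (degH H (f w))^k :=
      Finset.sum_le_sum (fun f _ => by split <;> simp)
    have h2 : (∑ f : α → β, (degH H (f w))^k) = ∑ b : β, (degH H b)^k :=
      Fintype.sum_bijective _ hbij _ _ (fun f => rfl)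
    rw [hn]
    simpa using h1.trans (le_of_eq h2)
  · -- main case : n ≥ 2
    have hlt : n - 1 < n := by omega
    have harith : n - 1 - 1 + (k + 1) = n - 1 + k := by omega
    obtain ⟨v, hv0, hvp⟩ := exists_enum hconn w hcard (by omega)
    obtain ⟨p, hp⟩ : ∃ p : Fin n → Fin n,
        ∀ (i : Fin n), 0 < (i:ℕ) → ((p i : ℕ) < (i:ℕ) ∧ G.Adj (v (p i)) (v i)) :=
      ⟨fun i => if h : 0 < (i:ℕ) then (hvp i h).choose else i,
        fun i h => by dsimp only; rw [dif_pos h]; exact (hvp i h).choose_spec⟩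
    obtain ⟨T, hT⟩ : ∃ T : SimpleGraph α, T =
        SimpleGraph.fromRel (fun a b => ∃ i : Fin n, 0 < (i:ℕ) ∧ a = v (p i) ∧ b = v i) :=
      ⟨_, rfl⟩
    have hTle : ∀ a b : α, T.Adj a b → G.Adj a b := by
      intro a b hab
      rw [hT, SimpleGraph.fromRel_adj] at hab
      obtain ⟨hne, h | h⟩ := hab
      · obtain ⟨i, hi, rfl, rfl⟩ := h
        exact (hp i hi).2
      · obtain ⟨i, hi, rfl, rfl⟩ := h
        exact ((hp i hi).2).symm
    set last : Fin n := ⟨n-1, by omega⟩ with hlastdef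
    have hlastpos : 0 < (last : ℕ) := by
      simp only [hlastdef]
      omega
    set y := v last with hy
    set x := v (p last) with hx
    have hplast := hp last hlastpos
    have hxyi : p last ≠ last := by
      intro h
      rw [h] at hplast
      omega
    have hxy : x ≠ y := fun h => hxyi (v.injective h)
    have hwy : w ≠ y := by
      rw [← hv0, hy]
      intro h
      have := congrArg Fin.val (v.injective h)
      simp only [hlastdef] at this
      omega
    have hTy : ∀ a : α, T.Adj a y → a = x := by
      intro a hab
      rw [hT, SimpleGraph.fromRel_adj] at hab
      obtain ⟨hne, h | h⟩ := hab
      · obtain ⟨i, hi, rfl, h2⟩ := h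
        have : i = last := v.injective h2.symm
        rw [this]
      · obtain ⟨i, hi, h1, rfl⟩ := h
        exfalso
        have h3 : p i = last := v.injective h1.symm
        have h4 := (hp i hi).1
        have h5 := congrArg Fin.val h3
        simp only [hlastdef] at h5
        have := i.isLt
        omega
    set α' := {a : α // a ≠ y} with hα'
    set G' : SimpleGraph α' := SimpleGraph.comap (Subtype.val) T with hG'
    have hcard' : Fintype.card α' = n - 1 := by
      have h1 : Fintype.card α' = Fintype.card α - Fintype.card {a : α // a = y} :=
        Fintype.card_subtype_compl _
      rw [Fintype.card_subtype_eq] at h1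
      omega
    have hvy : ∀ i : Fin n, (i:ℕ) < n - 1 → v i ≠ y := by
      intro i hi h
      have := congrArg Fin.val (v.injective h)
      simp only [hlastdef] at this
      omega
    set root' : α' := ⟨w, hwy⟩ with hroot'
    have hreach : ∀ (m : ℕ) (i : Fin n) (him : (i:ℕ) = m) (hi : (i:ℕ) < n - 1),
        G'.Reachable root' ⟨v i, hvy i hi⟩ := by
      intro m
      induction m using Nat.strong_induction_on with
      | _ m IHm =>
      intro i him hi
      by_cases h0 : (i:ℕ) = 0
      · have hvw : v i = w := by
          rw [← hv0]
          congr 1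
          exact Fin.ext h0
        have : (⟨v i, hvy i hi⟩ : α') = root' := Subtype.ext hvw
        rw [this]
      · have hipos : 0 < (i:ℕ) := by omega
        have hpi := hp i hipos
        have hpiy : ((p i : Fin n) : ℕ) < n - 1 := by omega
        have hadjT : T.Adj (v (p i)) (v i) := by
          rw [hT, SimpleGraph.fromRel_adj]
          refine ⟨?_, Or.inl ⟨i, hipos, rfl, rfl⟩⟩
          intro h
          have := congrArg Fin.val (v.injective h)
          omega
        have hadj' : G'.Adj ⟨v (p i), hvy _ hpiy⟩ ⟨v i, hvy i hi⟩ := hadjT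
        exact (IHm (p i : ℕ) (by omega) (p i) rfl hpiy).trans hadj'.reachable
    have hkey : ∀ a : α', G'.Reachable root' a := by
      intro a
      obtain ⟨a, ha⟩ := a
      have hvi : v (v.symm a) = a := v.apply_symm_apply a
      have hilt : ((v.symm a : Fin n) : ℕ) < n - 1 := by
        have hne : v.symm a ≠ last := by
          intro h
          rw [h] at hvi
          exact ha (hvi ▸ rfl)
        have h1 : ((v.symm a : Fin n) : ℕ) < n := (v.symm a).isLt
        have h2 : ((v.symm a : Fin n) : ℕ) ≠ n-1 := by
          intro h
          apply hne
          apply Fin.ext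
          simp only [hlastdef]
          exact h
        omega
      have := hreach _ (v.symm a) rfl hilt
      have heq : (⟨v (v.symm a), hvy _ hilt⟩ : α') = ⟨a, ha⟩ := Subtype.ext hvi
      rwa [heq] at this
    have hconn' : G'.Connected := by
      rw [SimpleGraph.connected_iff]
      exact ⟨fun a b => ((hkey a).symm.trans (hkey b)), ⟨root'⟩⟩
    -- splitting the sum
    set e := Equiv.funSplitAt y β with he
    have hfy : ∀ (c : β) (g : α' → β), (e.symm (c, g)) y = c := by
      intro c g
      simp [he]
    have hfa : ∀ (c : β) (g : α' → β) (a : α) (ha : a ≠ y), (e.symm (c, g)) a = g ⟨a, ha⟩ := by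
      intro c g a ha
      simp [he, ha]
    have key : ∀ (c : β) (g : α' → β),
        (∀ ⦃a b : α⦄, T.Adj a b → H ((e.symm (c,g)) a) ((e.symm (c,g)) b)) ↔
        ((∀ ⦃a b : α'⦄, G'.Adj a b → H (g a) (g b)) ∧ H (g ⟨x, hxy⟩) c) := by
      intro c g
      constructor
      · intro hf
        constructor
        · intro a b hab
          have h2 : T.Adj a.1 b.1 := hab
          have := hf h2
          rwa [hfa c g a.1 a.2, hfa c g b.1 b.2] at this
        · have hTxy : T.Adj x y := by
            rw [hT, SimpleGraph.fromRel_adj]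
            exact ⟨hxy, Or.inl ⟨last, hlastpos, rfl, rfl⟩⟩
          have := hf hTxy
          rwa [hfa c g x hxy, hfy] at this
      · rintro ⟨hg, hgx⟩ a b hab
        by_cases hay : a = y
        · subst hay
          have hbx : b = x := hTy b hab.symm
          subst hbx
          rw [hfy, hfa c g x hxy]
          exact hSymm hgx
        · by_cases hby : b = y
          · subst hby
            have hax : a = x := hTy a hab
            subst hax
            rw [hfy, hfa c g x hxy]
            exact hgx
          · have h2 : G'.Adj ⟨a, hay⟩ ⟨b, hby⟩ := hab
            rw [hfa c g a hay, hfa c g b hby]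
            exact hg h2
    have step2 : (∑ f : α → β, if (∀ ⦃a b : α⦄, T.Adj a b → H (f a) (f b))
          then (degH H (f w))^k else 0)
        = ∑ g : α' → β, if (∀ ⦃a b : α'⦄, G'.Adj a b → H (g a) (g b))
          then (degH H (g ⟨w, hwy⟩))^k * degH H (g ⟨x, hxy⟩) else 0 := by
      rw [← Equiv.sum_comp e.symm (fun f => if (∀ ⦃a b : α⦄, T.Adj a b → H (f a) (f b))
        then (degH H (f w))^k else 0)]
      rw [Fintype.sum_prod_type, Finset.sum_comm]
      apply Finset.sum_congr rfl
      intro g _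
      have hcc : ∀ c : β, (if (∀ ⦃a b : α⦄, T.Adj a b → H ((e.symm (c,g)) a) ((e.symm (c,g)) b))
            then (degH H ((e.symm (c,g)) w))^k else 0)
          = if ((∀ ⦃a b : α'⦄, G'.Adj a b → H (g a) (g b)) ∧ H (g ⟨x,hxy⟩) c)
            then (degH H (g ⟨w,hwy⟩))^k else 0 := by
        intro c
        rw [hfa c g w hwy]
        exact if_congr (key c g) rfl rfl
      rw [Finset.sum_congr rfl (fun c _ => hcc c)]
      by_cases hg : (∀ ⦃a b : α'⦄, G'.Adj a b → H (g a) (g b))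
      · have hiff : ∀ c : β,
            (((∀ ⦃a b : α'⦄, G'.Adj a b → H (g a) (g b)) ∧ H (g ⟨x,hxy⟩) c) ↔ H (g ⟨x,hxy⟩) c) :=
          fun c => ⟨fun h => h.2, fun h => ⟨hg, h⟩⟩
        rw [Finset.sum_congr rfl (fun c _ => if_congr (hiff c) rfl rfl), if_pos hg]
        exact hdeg H (g ⟨x,hxy⟩) _
      · rw [if_neg hg]
        exact Finset.sum_eq_zero (fun c _ => if_neg (fun hc => hg hc.1))
    have step1 : (∑ f : α → β, if (∀ ⦃a b : α⦄, G.Adj a b → H (f a) (f b))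
          then (degH H (f w))^k else 0)
        ≤ ∑ f : α → β, if (∀ ⦃a b : α⦄, T.Adj a b → H (f a) (f b))
          then (degH H (f w))^k else 0 := by
      apply Finset.sum_le_sum
      intro f _
      split_ifs with h1 h2
      · exact le_refl _
      · exact absurd (fun a b hab => h1 (hTle a b hab)) h2
      · exact Nat.zero_le _
      · exact le_refl _
    rw [step2] at step1
    refine step1.trans ?_
    by_cases hxw : x = w
    · have hx'w' : (⟨x, hxy⟩ : α') = ⟨w, hwy⟩ := Subtype.ext hxw
      have step3 : (∑ g : α' → β, if (∀ ⦃a b : α'⦄, G'.Adj a b → H (g a) (g b))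
            then (degH H (g ⟨w, hwy⟩))^k * degH H (g ⟨x, hxy⟩) else 0)
          = ∑ g : α' → β, if (∀ ⦃a b : α'⦄, G'.Adj a b → H (g a) (g b))
            then (degH H (g ⟨w, hwy⟩))^(k+1) else 0 := by
        apply Finset.sum_congr rfl
        intro g _
        rw [hx'w', pow_succ]
      rw [step3]
      have IH' := IH (n-1) hlt α' G' hcard' hconn' ⟨w, hwy⟩ (k+1)
      rw [harith] at IH'
      refine le_of_eq_of_le ?_ IH'
      exact sum_univ_congr _ _ _
    · refine Nat.le_of_mul_le_mul_left ?_ (Nat.succ_pos k)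
      have expand : (k+1) * (∑ g : α' → β, if (∀ ⦃a b : α'⦄, G'.Adj a b → H (g a) (g b))
            then (degH H (g ⟨w, hwy⟩))^k * degH H (g ⟨x, hxy⟩) else 0)
          = ∑ g : α' → β, if (∀ ⦃a b : α'⦄, G'.Adj a b → H (g a) (g b))
            then (k+1) * ((degH H (g ⟨x, hxy⟩)) * (degH H (g ⟨w, hwy⟩))^k) else 0 := by
        rw [Finset.mul_sum]
        apply Finset.sum_congr rfl
        intro g _
        rw [mul_ite, mul_zero]
        congr 1
        ring
      rw [expand]
      have bnd : (∑ g : α' → β, if (∀ ⦃a b : α'⦄, G'.Adj a b → H (g a) (g b))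
            then (k+1) * ((degH H (g ⟨x, hxy⟩)) * (degH H (g ⟨w, hwy⟩))^k) else 0)
          ≤ ∑ g : α' → β, if (∀ ⦃a b : α'⦄, G'.Adj a b → H (g a) (g b))
            then ((degH H (g ⟨x, hxy⟩))^(k+1) + k * (degH H (g ⟨w, hwy⟩))^(k+1)) else 0 := by
        apply Finset.sum_le_sum
        intro g _
        split_ifs with h
        · exact amgm k _ _
        · exact le_refl _
      refine (bnd.trans ?_)
      have split : (∑ g : α' → β, if (∀ ⦃a b : α'⦄, G'.Adj a b → H (g a) (g b))
            then ((degH H (g ⟨x, hxy⟩))^(k+1) + k * (degH H (g ⟨w, hwy⟩))^(k+1)) else 0)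
          = (∑ g : α' → β, if (∀ ⦃a b : α'⦄, G'.Adj a b → H (g a) (g b))
            then (degH H (g ⟨x, hxy⟩))^(k+1) else 0)
          + k * (∑ g : α' → β, if (∀ ⦃a b : α'⦄, G'.Adj a b → H (g a) (g b))
            then (degH H (g ⟨w, hwy⟩))^(k+1) else 0) := by
        rw [Finset.mul_sum, ← Finset.sum_add_distrib]
        apply Finset.sum_congr rfl
        intro g _
        split_ifs with h
        · rfl
        · simp
      rw [split]
      have IHx := IH (n-1) hlt α' G' hcard' hconn' ⟨x, hxy⟩ (k+1)
      have IHw := IH (n-1) hlt α' G' hcard' hconn' ⟨w, hwy⟩ (k+1)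
      rw [harith] at IHx IHw
      have IHx' : (∑ g : α' → β, if (∀ ⦃a b : α'⦄, G'.Adj a b → H (g a) (g b))
            then (degH H (g ⟨x, hxy⟩))^(k+1) else 0) ≤ ∑ b : β, (degH H b)^(n-1+k) := by
        refine le_of_eq_of_le ?_ IHx
        exact sum_univ_congr _ _ _
      have IHw' : (∑ g : α' → β, if (∀ ⦃a b : α'⦄, G'.Adj a b → H (g a) (g b))
            then (degH H (g ⟨w, hwy⟩))^(k+1) else 0) ≤ ∑ b : β, (degH H b)^(n-1+k) := by
        refine le_of_eq_of_le ?_ IHw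
        exact sum_univ_congr _ _ _
      calc _ ≤ (∑ b : β, (degH H b)^(n-1+k)) + k * (∑ b : β, (degH H b)^(n-1+k)) :=
            Nat.add_le_add IHx' (Nat.mul_le_mul_left k IHw')
        _ = (k+1) * ∑ b : β, (degH H b)^(n-1+k) := by ring


/-- For every finite graph `H` (loops allowed) and every connected simple graph `G` on
`n ≥ 2` vertices, `hom(G,H) ≤ hom(K_{1,n-1},H)`: the star maximizes the number of
`H`-colorings among connected graphs. -/
theorem homCount_le_star {α β : Type*} [Fintype α] [Fintype β]
    (H : β → β → Prop) (hSymm : Symmetric H)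
    (G : SimpleGraph α) (n : ℕ) (hcard : Fintype.card α = n) (hn : 2 ≤ n)
    (hGconn : G.Connected) :
    homCount G H ≤ homCount (completeBipartiteGraph (Fin 1) (Fin (n - 1))) H := by
  classical
  rw [star_count H hSymm (n-1)]
  obtain ⟨w⟩ : Nonempty α := hGconn.nonempty
  have main := main_claim H hSymm n α G hcard hGconn w 0
  have hcount : homCount G H = ∑ f : α → β,
      if (∀ ⦃a b : α⦄, G.Adj a b → H (f a) (f b)) then (degH H (f w))^0 else 0 := by
    rw [homCount, Nat.card_eq_fintype_card, Fintype.card_subtype, Finset.card_filter]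
    apply Finset.sum_congr rfl
    intro f _
    rw [pow_zero]
  rw [hcount]
  simpa using main
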